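/- Let n ≥ 1 and let G be the free abelian group of rank n (i.e. ℤⁿ). Let χ : G → ℂˣ be a group homomorphism all of whose values lie on the unit circle (|χ(g)| = 1 for all g ∈ G), and let V be the one-dimensional complex representation of G on ℂ in which g acts as multiplication by χ(g). If the zeroth group cohomology H⁰(G; V) vanishes, then the group cohomology Hᵏ(G; V) vanishes for every k ≥ 0. -/

import Mathlib

noncomputable section AuxVanishing

open CategoryTheory groupCohomology

variable {k G : Type} [CommRing k] [CommGroup G]

/-- The endomorphism of a representation given by the action of a (central) group element. -/
def rhoEnd (X : Rep k G) (g₀ : G) : X ⟶ X := X.applyAsHom g₀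

namespace groupCohomology

variable (k G) in
/-- The bar resolution (replacing the former standard resolution). -/
abbrev resolution : ChainComplex (Rep k G) ℕ := (Rep.barResolution k G).complex

variable (k G) in
/-- The bar resolution as a projective resolution. -/
abbrev projectiveResolution : ProjectiveResolution (Rep.trivial k G k) := Rep.barResolution k G

/-- `Hom(P, A)` for the bar resolution `P`. -/
abbrev linearYonedaObjResolution (A : Rep k G) : CochainComplex (ModuleCat k) ℕ :=
  (resolution k G).linearYonedaObj k A

lemma linearYonedaObjResolution_d_apply (A : Rep k G) (i j : ℕ) (f : (resolution k G).X i ⟶ A) :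
    (linearYonedaObjResolution A).d i j f = (resolution k G).d j i ≫ f := rfl

end groupCohomology

lemma rhoEnd_comp {X A : Rep k G} (g₀ : G) (c : k) (hc : A.ρ g₀ = c • LinearMap.id)
    (f : X ⟶ A) : rhoEnd X g₀ ≫ f = c • f := by
  ext x
  show f.hom (X.ρ g₀ x) = (c • f.hom) x
  rw [Rep.hom_comm_apply, hc]
  rfl

/-- The chain endomorphism of the standard resolution given by the action of a central
element. -/
def chainRho (g₀ : G) : groupCohomology.resolution k G ⟶ groupCohomology.resolution k G where
  f i := rhoEnd _ g₀
  comm' i j _ := by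
    exact Rep.applyAsHom_comm _ g₀

lemma chainRho_comp_π (g₀ : G) :
    chainRho (k := k) g₀ ≫ (groupCohomology.projectiveResolution k G).π
      = (groupCohomology.projectiveResolution k G).π := by
  refine HomologicalComplex.hom_ext _ _ fun i => ?_
  match i with
  | 0 =>
    rw [HomologicalComplex.comp_f]
    exact (Rep.applyAsHom_comm _ g₀).trans (by ext x; rfl)
  | (i+1) =>
    apply (HomologicalComplex.isZero_single_obj_X
      (ComplexShape.down ℕ) 0 _ (i+1) (by simp)).eq_of_tgt

/-- The central action chain map is homotopic to the identity. -/
def htpy (g₀ : G) : Homotopy (chainRho (k := k) g₀) (𝟙 (groupCohomology.resolution k G)) :=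
  ProjectiveResolution.liftHomotopy (P := groupCohomology.projectiveResolution k G)
    (Q := groupCohomology.projectiveResolution k G) (𝟙 (Rep.trivial k G k)) _ _
    (by rw [CategoryTheory.Functor.map_id, Category.comp_id]; exact chainRho_comp_π g₀)
    (by rw [CategoryTheory.Functor.map_id, Category.comp_id]; exact Category.id_comp _)

lemma exactAt_LYOR {F G : Type} [Field F] [CommGroup G] (A : Rep F G) (g₀ : G) (c : F)
    (hc : A.ρ g₀ = c • LinearMap.id) (hc1 : c ≠ 1) (m : ℕ) :
    (linearYonedaObjResolution A).ExactAt m := by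
  have hsub : c - 1 ≠ 0 := sub_ne_zero.2 hc1
  have h := htpy (k := F) (G := G) g₀
  have key0 : ∀ (f : (groupCohomology.resolution F G).X 0 ⟶ A),
      (groupCohomology.resolution F G).d 1 0 ≫ f = 0 → f = 0 := by
    intro f hf'
    have hcm := h.comm 0
    rw [Homotopy.dNext_zero_chainComplex, Homotopy.prevD_chainComplex] at hcm
    norm_num at hcm
    have e1 : rhoEnd ((groupCohomology.resolution F G).X 0) g₀ ≫ f = c • f :=
      rhoEnd_comp g₀ c hc f
    have e2 : rhoEnd ((groupCohomology.resolution F G).X 0) g₀ ≫ f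
        = h.hom 0 1 ≫ ((groupCohomology.resolution F G).d 1 0 ≫ f) + f := by
      rw [show rhoEnd ((groupCohomology.resolution F G).X 0) g₀
        = (chainRho (k := F) g₀).f 0 from rfl, hcm]
      simp [Preadditive.add_comp, Category.assoc]
    rw [hf', Limits.comp_zero, zero_add] at e2
    have h3 : (c - 1) • f = 0 := by
      rw [sub_smul, one_smul, ← e1, e2, sub_self]
    have h4 := congrArg (fun z => (c - 1)⁻¹ • z) h3
    simpa [smul_smul, inv_mul_cancel₀ hsub] using h4
  have keyS : ∀ (j : ℕ) (f : (groupCohomology.resolution F G).X (j+1) ⟶ A),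
      (groupCohomology.resolution F G).d (j+2) (j+1) ≫ f = 0 →
      (groupCohomology.resolution F G).d (j+1) j ≫ ((c - 1)⁻¹ • (h.hom j (j+1) ≫ f)) = f := by
    intro j f hf'
    have hcm := h.comm (j+1)
    rw [Homotopy.dNext_succ_chainComplex, Homotopy.prevD_chainComplex] at hcm
    have hcm' : (chainRho (k := F) g₀).f (j+1)
        = (groupCohomology.resolution F G).d (j+1) j ≫ h.hom j (j+1)
          + h.hom (j+1) (j+2) ≫ (groupCohomology.resolution F G).d (j+2) (j+1)
          + 𝟙 _ := by
      rw [hcm]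
      norm_num
    have e1 : rhoEnd ((groupCohomology.resolution F G).X (j+1)) g₀ ≫ f = c • f :=
      rhoEnd_comp g₀ c hc f
    have e2 : rhoEnd ((groupCohomology.resolution F G).X (j+1)) g₀ ≫ f
        = (groupCohomology.resolution F G).d (j+1) j ≫ (h.hom j (j+1) ≫ f)
          + h.hom (j+1) (j+2) ≫ ((groupCohomology.resolution F G).d (j+2) (j+1) ≫ f) + f := by
      rw [show rhoEnd ((groupCohomology.resolution F G).X (j+1)) g₀
        = (chainRho (k := F) g₀).f (j+1) from rfl, hcm']
      simp [Preadditive.add_comp, Category.assoc]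
    rw [hf', Limits.comp_zero, add_zero] at e2
    have e3 : (groupCohomology.resolution F G).d (j+1) j ≫ (h.hom j (j+1) ≫ f)
        = (c - 1) • f := by
      rw [sub_smul, one_smul, ← e1, e2]
      abel
    rw [Linear.comp_smul, e3, smul_smul, inv_mul_cancel₀ hsub, one_smul]
  match m with
  | 0 =>
    rw [HomologicalComplex.exactAt_iff' _ 0 0 1 (by simp) (by simp),
      ShortComplex.moduleCat_exact_iff]
    intro f hf
    have hf' : (groupCohomology.resolution F G).d 1 0 ≫ f = 0 := by
      have h2 : (linearYonedaObjResolution A).d 0 1 f = 0 := hf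
      exact h2
    refine ⟨0, ?_⟩
    show (linearYonedaObjResolution A).d 0 0 0 = f
    rw [map_zero]
    exact (key0 f hf').symm
  | (j+1) =>
    rw [HomologicalComplex.exactAt_iff' _ j (j+1) (j+2) (by simp) (by simp),
      ShortComplex.moduleCat_exact_iff]
    intro f hf
    have hf' : (groupCohomology.resolution F G).d (j+2) (j+1) ≫ f = 0 := by
      have h2 : (linearYonedaObjResolution A).d (j+1) (j+2) f = 0 := hf
      exact h2
    refine ⟨(c - 1)⁻¹ • (h.hom j (j+1) ≫ f), ?_⟩
    show (linearYonedaObjResolution A).d j (j+1) ((c - 1)⁻¹ • (h.hom j (j+1) ≫ f)) = f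
    exact keyS j f hf'

end AuxVanishing


/-- The one-dimensional representation of `ℤⁿ` on `ℂ` in which `g` acts as
multiplication by `χ g`. -/
noncomputable def unitaryCharacterRep {n : ℕ}
    (χ : Multiplicative (Fin n → ℤ) →* ℂˣ) :
    Representation ℂ (Multiplicative (Fin n → ℤ)) ℂ where
  toFun g := (χ g : ℂ) • LinearMap.id
  map_one' := by
    simp [Module.End.one_eq_id]
  map_mul' g h := by
    refine LinearMap.ext fun x => ?_
    show ((χ (g * h) : ℂ)) • x = (χ g : ℂ) • ((χ h : ℂ) • x)
    rw [map_mul, Units.val_mul, mul_smul]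

open CategoryTheory groupCohomology in
/-- Vanishing of cohomology: if `χ : ℤⁿ → ℂˣ` is a unitary character and the
zeroth group cohomology of the associated one-dimensional representation
vanishes, then all its group cohomology vanishes. -/
theorem groupCohomology_vanishing_of_H0_vanishing {n : ℕ} (hn : 1 ≤ n)
    (χ : Multiplicative (Fin n → ℤ) →* ℂˣ)
    (hχ : ∀ g, ‖((χ g : ℂ))‖ = 1)
    (h0 : Subsingleton (groupCohomology (Rep.of (unitaryCharacterRep χ)) 0)) :
    ∀ k : ℕ, Subsingleton (groupCohomology (Rep.of (unitaryCharacterRep χ)) k) := by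
  intro m
  set A : Rep ℂ (Multiplicative (Fin n → ℤ)) := Rep.of (unitaryCharacterRep χ) with hA
  obtain ⟨g₀, hg₀⟩ : ∃ g₀, (χ g₀ : ℂ) ≠ 1 := by
    by_contra hcon
    push_neg at hcon
    have hsub : Subsingleton (ModuleCat.of ℂ A.ρ.invariants) :=
      ((groupCohomology.H0Iso A).toLinearEquiv.symm.toEquiv).subsingleton
    have h1 : (1 : ℂ) ∈ A.ρ.invariants := by
      rw [Representation.mem_invariants]
      intro g
      show ((unitaryCharacterRep χ) g) (1 : ℂ) = 1
      show (χ g : ℂ) • (1 : ℂ) = 1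
      rw [smul_eq_mul, mul_one, hcon]
    have he := @Subsingleton.elim (ModuleCat.of ℂ A.ρ.invariants) hsub
      ⟨(1 : ℂ), h1⟩ ⟨(0 : ℂ), Submodule.zero_mem _⟩
    have h10 : (1 : ℂ) = (0 : ℂ) := congrArg Subtype.val he
    exact one_ne_zero h10
  have hc : A.ρ g₀ = ((χ g₀ : ℂ)) • LinearMap.id := rfl
  have hE := exactAt_LYOR A g₀ _ hc hg₀ m
  have hE2 : (inhomogeneousCochains A).ExactAt m :=
    hE.of_iso (inhomogeneousCochainsIso A).symm
  rw [HomologicalComplex.exactAt_iff_isZero_homology] at hE2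
  have hid : 𝟙 ((inhomogeneousCochains A).homology m) = 0 := hE2.eq_of_src _ _
  have hz : ∀ x : (inhomogeneousCochains A).homology m, x = 0 := by
    intro x
    have h1 : x = (𝟙 ((inhomogeneousCochains A).homology m)) x := rfl
    rw [hid] at h1
    exact h1
  exact ⟨fun a b => (hz a).trans (hz b).symm⟩
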